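/- Let (R, 𝔪) be a commutative Noetherian local ring, let R[X] be the polynomial ring in one variable, and let I = 𝔪·R[X] + (X) be the ideal generated by the image of 𝔪 and by X. Then for every n ∈ ℕ, the length of R[X]/I^{n+1} as an R-module equals the finite sum ∑_{j=0}^{n} length_R(R/𝔪^{j+1}). -/

import Mathlib

open Polynomial

/-- The length of a module: the Krull dimension of its lattice of submodules
(read in `ℕ∞`, the lattice of submodules being nonempty). -/
noncomputable def moduleLength (R M : Type*) [Ring R] [AddCommGroup M] [Module R M] : ℕ∞ :=
  (Order.krullDim (Submodule R M)).unbotD 0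

section General
variable {R M N' : Type*} [Ring R] [AddCommGroup M] [Module R M]
  [AddCommGroup N'] [Module R N']

lemma moduleLength_eq_height : moduleLength R M = Order.height (⊤ : Submodule R M) := by
  rw [moduleLength, ← Order.height_top_eq_krullDim, WithBot.unbotD_coe]

lemma moduleLength_eq_zero [Subsingleton M] : moduleLength R M = 0 := by
  have : Unique (Submodule R M) := ⟨⟨⊥⟩, fun a => Subsingleton.elim _ _⟩
  rw [moduleLength, Order.krullDim_eq_zero_of_unique]; rfl

lemma moduleLength_congr (e : M ≃ₗ[R] N') : moduleLength R M = moduleLength R N' := by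
  rw [moduleLength, moduleLength, Order.krullDim_eq_of_orderIso (Submodule.orderIsoMapComap e)]

open Order in
lemma LTSeries.length_le_height_add_height {α β : Type*} [PartialOrder α] [PartialOrder β]
    (p : LTSeries (α × β)) : (p.length : ℕ∞) ≤ height p.last.1 + height p.last.2 := by
  suffices H : ∀ (n : ℕ) (p : LTSeries (α × β)), p.length = n →
      (p.length : ℕ∞) ≤ height p.last.1 + height p.last.2 from H p.length p rfl
  intro n
  induction n with
  | zero => intro p hn; simp [hn]
  | succ n IH =>
    intro p hn
    have hlen : p.eraseLast.length = n := by simp [hn]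
    have hlt : p.eraseLast.last < p.last := p.eraseLast_last_rel_last (by omega)
    have h1 : p.eraseLast.last.1 ≤ p.last.1 := (le_of_lt hlt).1
    have h2 : p.eraseLast.last.2 ≤ p.last.2 := (le_of_lt hlt).2
    have IH' := IH p.eraseLast hlen
    rw [hlen] at IH'
    rw [hn]
    by_cases htop : height p.last.1 = ⊤ ∨ height p.last.2 = ⊤
    · rcases htop with h | h <;> simp [h]
    push_neg at htop
    have fin1 : height p.eraseLast.last.1 < ⊤ :=
      lt_of_le_of_lt (Order.height_mono h1) (lt_top_iff_ne_top.2 htop.1)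
    have fin2 : height p.eraseLast.last.2 < ⊤ :=
      lt_of_le_of_lt (Order.height_mono h2) (lt_top_iff_ne_top.2 htop.2)
    rcases Prod.lt_iff.1 hlt with ⟨hs, hle⟩ | ⟨hle, hs⟩
    · have := Order.height_strictMono hs fin1
      calc ((n+1 : ℕ) : ℕ∞) = (n : ℕ∞) + 1 := by push_cast; ring
        _ ≤ (height p.eraseLast.last.1 + height p.eraseLast.last.2) + 1 := by
            exact add_le_add IH' le_rfl
        _ = (height p.eraseLast.last.1 + 1) + height p.eraseLast.last.2 := by ring
        _ ≤ height p.last.1 + height p.last.2 :=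
            add_le_add (Order.add_one_le_of_lt this) (Order.height_mono hle)
    · have := Order.height_strictMono hs fin2
      calc ((n+1 : ℕ) : ℕ∞) = (n : ℕ∞) + 1 := by push_cast; ring
        _ ≤ (height p.eraseLast.last.1 + height p.eraseLast.last.2) + 1 := by
            exact add_le_add IH' le_rfl
        _ = height p.eraseLast.last.1 + (height p.eraseLast.last.2 + 1) := by ring
        _ ≤ height p.last.1 + height p.last.2 :=
            add_le_add (Order.height_mono hle) (Order.add_one_le_of_lt this)

end General

section Additive
variable {R M : Type*} [Ring R] [AddCommGroup M] [Module R M]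

open Order in
lemma moduleLength_additive (N : Submodule R M) :
    moduleLength R M = moduleLength R N + moduleLength R (M ⧸ N) := by
  rw [moduleLength_eq_height, moduleLength_eq_height, moduleLength_eq_height]
  apply le_antisymm
  · set f : Submodule R M → Submodule R N × Submodule R (M ⧸ N) :=
      fun r => (Submodule.comap N.subtype r, Submodule.map N.mkQ r) with hfdef
    have hf : StrictMono f := by
      intro r s hrs
      have hle : f r ≤ f s :=
        ⟨Submodule.comap_mono hrs.le, Submodule.map_mono hrs.le⟩
      refine lt_of_le_of_ne hle (fun heq => ?_)
      have h1 : Submodule.comap N.subtype r = Submodule.comap N.subtype s :=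
        congrArg Prod.fst heq
      have h2 : Submodule.map N.mkQ r = Submodule.map N.mkQ s :=
        congrArg Prod.snd heq
      have hinf : N ⊓ r = N ⊓ s := by
        rw [← Submodule.map_comap_subtype, ← Submodule.map_comap_subtype, h1]
      have hsup : N ⊔ r = N ⊔ s := by
        rw [← Submodule.comap_map_mkQ, ← Submodule.comap_map_mkQ, h2]
      have := sup_lt_sup_of_lt_of_inf_le_inf hrs
        (le_of_eq (by rw [inf_comm, ← hinf, inf_comm]))
      rw [sup_comm r N, sup_comm s N, hsup] at this
      exact absurd rfl this.ne
    have h1 : height (⊤ : Submodule R M) ≤ height (f ⊤) :=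
      Order.height_le_height_apply_of_strictMono f hf ⊤
    have hftop : f ⊤ = (⊤, ⊤) := by
      simp [hfdef, Submodule.comap_top, Submodule.map_top, Submodule.range_mkQ]
    rw [hftop] at h1
    refine h1.trans (Order.height_le fun p hp => ?_)
    have := p.length_le_height_add_height
    rwa [hp] at this
  · rw [Order.height_eq_iSup_last_eq, Order.height_eq_iSup_last_eq]
    have hex : ∃ p : LTSeries (Submodule R N), p.last = ⊤ :=
      ⟨RelSeries.singleton _ ⊤, rfl⟩
    have hex' : ∃ q : LTSeries (Submodule R (M ⧸ N)), q.last = ⊤ :=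
      ⟨RelSeries.singleton _ ⊤, rfl⟩
    rw [ENat.biSup_add' hex]
    refine iSup₂_le fun p hp => ?_
    rw [ENat.add_biSup' hex']
    refine iSup₂_le fun q hq => ?_
    -- build q' with head ⊥
    obtain ⟨q', hq'head, hq'last, hq'len⟩ :
        ∃ q' : LTSeries (Submodule R (M ⧸ N)), q'.head = ⊥ ∧ q'.last = ⊤ ∧
          q.length ≤ q'.length := by
      by_cases hh : q.head = ⊥
      · exact ⟨q, hh, hq, le_rfl⟩
      · exact ⟨q.cons ⊥ (bot_lt_iff_ne_bot.2 hh), rfl, by simp [hq],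
          by simp [RelSeries.cons_length]⟩
    set P : LTSeries (Submodule R M) :=
      p.map (Submodule.map N.subtype)
        (Submodule.map_strictMono_of_injective N.injective_subtype) with hP
    set Q : LTSeries (Submodule R M) :=
      q'.map (Submodule.comap N.mkQ)
        (Submodule.comap_strictMono_of_surjective N.mkQ_surjective) with hQ
    have hconn : P.last = Q.head := by
      show Submodule.map N.subtype p.last = Submodule.comap N.mkQ q'.head
      rw [hp, hq'head, Submodule.comap_bot, Submodule.ker_mkQ, Submodule.map_top,
        Submodule.range_subtype]
    have hlast : (P.smash Q hconn).last = ⊤ := by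
      rw [RelSeries.last_smash]
      show Submodule.comap N.mkQ q'.last = ⊤
      rw [hq'last, Submodule.comap_top]
    have hlen := Order.length_le_height_last (p := P.smash Q hconn)
    rw [hlast] at hlen
    refine le_trans ?_ hlen
    have : (P.smash Q hconn).length = p.length + q'.length := rfl
    rw [this]
    push_cast
    exact add_le_add le_rfl (by exact_mod_cast hq'len)

lemma moduleLength_additive_of_injective {A : Type*} [AddCommGroup A] [Module R A]
    (ψ : A →ₗ[R] M) (hψ : Function.Injective ψ) :
    moduleLength R M = moduleLength R A + moduleLength R (M ⧸ LinearMap.range ψ) := by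
  rw [moduleLength_additive (LinearMap.range ψ),
    ← moduleLength_congr (LinearEquiv.ofInjective ψ hψ)]

end Additive

section Poly
open Polynomial

variable {R : Type*} [CommRing R] (m : Ideal R)

/-- The ideal of polynomials whose `j`-th coefficient lies in `m ^ (k - j)`. -/
def coeffIdeal (k : ℕ) : Ideal R[X] where
  carrier := {f | ∀ j, f.coeff j ∈ m ^ (k - j)}
  add_mem' := fun hf hg j => by
    rw [Set.mem_setOf_eq] at *
    rw [coeff_add]; exact add_mem (hf j) (hg j)
  zero_mem' := fun j => by simp
  smul_mem' := fun c f hf j => by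
    rw [Set.mem_setOf_eq] at *
    rw [smul_eq_mul, coeff_mul]
    refine Submodule.sum_mem _ fun x hx => ?_
    have hxj : x.1 + x.2 = j := Finset.HasAntidiagonal.mem_antidiagonal.mp hx
    exact Ideal.pow_le_pow_right (by omega) (Ideal.mul_mem_left _ _ (hf x.2))

lemma mem_coeffIdeal {k : ℕ} {f : R[X]} :
    f ∈ coeffIdeal m k ↔ ∀ j, f.coeff j ∈ m ^ (k - j) := Iff.rfl

lemma coeffIdeal_mul_le (a b : ℕ) :
    coeffIdeal m a * coeffIdeal m b ≤ coeffIdeal m (a + b) := by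
  rw [Ideal.mul_le]
  intro f hf g hg
  rw [mem_coeffIdeal]
  intro j
  rw [coeff_mul]
  refine Submodule.sum_mem _ fun x hx => ?_
  have hxj : x.1 + x.2 = j := Finset.HasAntidiagonal.mem_antidiagonal.mp hx
  have hmem : f.coeff x.1 * g.coeff x.2 ∈ m ^ (a - x.1 + (b - x.2)) := by
    rw [pow_add]; exact Ideal.mul_mem_mul (hf x.1) (hg x.2)
  exact Ideal.pow_le_pow_right (by omega) hmem

variable (R) in
/-- The ideal `I = m R[X] + (X)`. -/
noncomputable abbrev polyIdeal : Ideal R[X] := m.map (C : R →+* R[X]) + Ideal.span {(X : R[X])}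

lemma map_C_pow_le (s : ℕ) : (m ^ s).map (C : R →+* R[X]) ≤ polyIdeal R m ^ s := by
  rw [Ideal.map_pow]
  exact Ideal.pow_right_mono le_sup_left s

lemma pow_le_coeffIdeal (k : ℕ) : polyIdeal R m ^ k ≤ coeffIdeal m k := by
  induction k with
  | zero =>
    intro f _
    rw [mem_coeffIdeal]
    intro j
    simp [Nat.zero_sub]
  | succ k IH =>
    rw [pow_succ]
    refine le_trans (Ideal.mul_mono IH ?_) (coeffIdeal_mul_le m k 1)
    refine sup_le ?_ ?_
    · rw [Ideal.map_le_iff_le_comap]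
      intro c hc
      rw [Ideal.mem_comap, mem_coeffIdeal]
      intro j
      cases j with
      | zero => simpa using hc
      | succ j => simp
    · rw [Ideal.span_le, Set.singleton_subset_iff]
      rw [SetLike.mem_coe, mem_coeffIdeal]
      intro j
      cases j with
      | zero => simp
      | succ j => simp [Polynomial.coeff_X]
lemma coeffIdeal_le_pow (k : ℕ) : coeffIdeal m k ≤ polyIdeal R m ^ k := by
  intro f hf
  rw [mem_coeffIdeal] at hf
  rw [← f.sum_monomial_eq]
  refine Submodule.sum_mem _ fun n _ => ?_
  dsimp only
  rw [← C_mul_X_pow_eq_monomial]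
  have h1 : (C (f.coeff n) : R[X]) ∈ (m ^ (k - n)).map (C : R →+* R[X]) :=
    Ideal.mem_map_of_mem _ (hf n)
  have h2 : ((X : R[X]) ^ n) ∈ Ideal.span {(X : R[X])} ^ n := by
    rw [Ideal.span_singleton_pow]
    exact Ideal.subset_span rfl
  have h3 := Ideal.mul_mem_mul h1 h2
  have h4 : (m ^ (k - n)).map (C : R →+* R[X]) * Ideal.span {(X : R[X])} ^ n ≤
      polyIdeal R m ^ k := by
    have e2 : Ideal.span {(X : R[X])} ^ n ≤ polyIdeal R m ^ n :=
      Ideal.pow_right_mono le_sup_right n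
    refine le_trans (Ideal.mul_mono (map_C_pow_le m _) e2) ?_
    rw [← pow_add]
    exact Ideal.pow_le_pow_right (by omega)
  exact h4 h3

lemma mem_polyIdeal_pow {k : ℕ} {f : R[X]} :
    f ∈ polyIdeal R m ^ k ↔ ∀ j, f.coeff j ∈ m ^ (k - j) :=
  ⟨fun h => pow_le_coeffIdeal m k h, fun h => coeffIdeal_le_pow m k h⟩

lemma X_mul_mem_pow_iff {k : ℕ} {f : R[X]} :
    (X : R[X]) * f ∈ polyIdeal R m ^ (k + 1) ↔ f ∈ polyIdeal R m ^ k := by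
  rw [mem_polyIdeal_pow, mem_polyIdeal_pow]
  constructor
  · intro h j
    have := h (j + 1)
    rwa [coeff_X_mul, Nat.succ_sub_succ] at this
  · intro h j
    cases j with
    | zero => simp [coeff_zero_eq_eval_zero]
    | succ j => rw [coeff_X_mul, Nat.succ_sub_succ]; exact h j

lemma span_X_sup_pow (k : ℕ) :
    Ideal.span {(X : R[X])} ⊔ polyIdeal R m ^ k =
      Ideal.span {(X : R[X])} ⊔ (m ^ k).map (C : R →+* R[X]) := by
  apply le_antisymm
  · rw [sup_le_iff]
    refine ⟨le_sup_left, ?_⟩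
    intro f hf
    have h0 : f.coeff 0 ∈ m ^ k := by simpa using (mem_polyIdeal_pow m).1 hf 0
    have : f = X * f.divX + C (f.coeff 0) := (X_mul_divX_add f).symm
    rw [this]
    refine Submodule.add_mem _ ?_ ?_
    · exact Submodule.mem_sup_left (Ideal.mem_span_singleton'.2 ⟨f.divX, mul_comm _ _⟩)
    · exact Submodule.mem_sup_right (Ideal.mem_map_of_mem _ h0)
  · rw [sup_le_iff]
    exact ⟨le_sup_left, le_trans (map_C_pow_le m k) le_sup_right⟩

lemma coeff_zero_mem_of_mem_sup {s : ℕ} {f : R[X]}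
    (hf : f ∈ Ideal.span {(X : R[X])} ⊔ (m ^ s).map (C : R →+* R[X])) :
    f.coeff 0 ∈ m ^ s := by
  rw [← span_X_sup_pow] at hf
  rcases Submodule.mem_sup.1 hf with ⟨a, ha, b, hb, rfl⟩
  rcases Ideal.mem_span_singleton'.1 ha with ⟨g, rfl⟩
  have hb0 : b.coeff 0 ∈ m ^ s := by simpa using (mem_polyIdeal_pow m).1 hb 0
  simpa [coeff_add, coeff_mul_X_zero] using hb0

end Poly

section Main
open Polynomial

variable {R : Type*} [CommRing R]

lemma step_length (m : Ideal R) (k : ℕ) :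
    moduleLength R (R[X] ⧸ polyIdeal R m ^ (k + 1)) =
      moduleLength R (R[X] ⧸ polyIdeal R m ^ k) + moduleLength R (R ⧸ m ^ (k + 1)) := by
  set I : Ideal R[X] := polyIdeal R m with hI
  set mkL : R[X] →ₗ[R] R[X] ⧸ I ^ (k + 1) :=
    (Ideal.Quotient.mkₐ R (I ^ (k + 1))).toLinearMap with hmkL
  set Φ : R[X] →ₗ[R] R[X] ⧸ I ^ (k + 1) :=
    mkL ∘ₗ (LinearMap.mulLeft R (X : R[X])) with hΦ
  have hΦ_apply : ∀ f : R[X], Φ f = Ideal.Quotient.mk (I ^ (k + 1)) (X * f) := fun f => rfl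
  have hkerΦ : LinearMap.ker Φ = Submodule.restrictScalars R (I ^ k) := by
    ext f
    rw [LinearMap.mem_ker, hΦ_apply, Ideal.Quotient.eq_zero_iff_mem,
      Submodule.restrictScalars_mem]
    exact X_mul_mem_pow_iff m
  have e_range : moduleLength R (LinearMap.range Φ) = moduleLength R (R[X] ⧸ I ^ k) := by
    rw [← moduleLength_congr (LinearMap.quotKerEquivRange Φ),
      moduleLength_congr (Submodule.quotEquivOfEq _ _ hkerΦ),
      moduleLength_congr (Submodule.Quotient.restrictScalarsEquiv R (I ^ k))]
  set Ψ : R[X] →ₗ[R] (R[X] ⧸ I ^ (k + 1)) ⧸ (LinearMap.range Φ) :=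
    (LinearMap.range Φ).mkQ ∘ₗ mkL with hΨ
  have hΨ_apply : ∀ f : R[X],
      Ψ f = (LinearMap.range Φ).mkQ (Ideal.Quotient.mk (I ^ (k + 1)) f) := fun f => rfl
  have hΨsurj : Function.Surjective Ψ := by
    intro y
    obtain ⟨x, rfl⟩ := (LinearMap.range Φ).mkQ_surjective y
    obtain ⟨f, rfl⟩ := Ideal.Quotient.mk_surjective x
    exact ⟨f, rfl⟩
  have hkerΨ : LinearMap.ker Ψ =
      Submodule.restrictScalars R (Ideal.span {(X : R[X])} ⊔ I ^ (k + 1)) := by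
    ext f
    rw [LinearMap.mem_ker, hΨ_apply, Submodule.mkQ_apply, Submodule.Quotient.mk_eq_zero,
      Submodule.restrictScalars_mem]
    constructor
    · rintro ⟨g, hg⟩
      rw [hΦ_apply, Ideal.Quotient.mk_eq_mk_iff_sub_mem] at hg
      have : f = X * g - (X * g - f) := by ring
      rw [this]
      exact Submodule.sub_mem _
        (Submodule.mem_sup_left (Ideal.mem_span_singleton'.2 ⟨g, mul_comm _ _⟩))
        (Submodule.mem_sup_right hg)
    · intro hf
      rcases Submodule.mem_sup.1 hf with ⟨a, ha, b, hb, rfl⟩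
      rcases Ideal.mem_span_singleton'.1 ha with ⟨g, rfl⟩
      refine ⟨g, ?_⟩
      rw [hΦ_apply, Ideal.Quotient.mk_eq_mk_iff_sub_mem]
      have : X * g - (g * X + b) = -b := by ring
      rw [this]
      exact Submodule.neg_mem _ hb
  set K : Ideal R[X] := Ideal.span {(X : R[X])} ⊔ (m ^ (k + 1)).map (C : R →+* R[X]) with hK
  set ψ : R →ₗ[R] R[X] ⧸ K :=
    (Ideal.Quotient.mkₐ R K).toLinearMap ∘ₗ Algebra.linearMap R R[X] with hψ
  have hψ_apply : ∀ c : R, ψ c = Ideal.Quotient.mk K (C c) := by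
    intro c
    show Ideal.Quotient.mkₐ R K (algebraMap R R[X] c) = _
    rw [algebraMap_eq, Ideal.Quotient.mkₐ_eq_mk]
  have hψsurj : Function.Surjective ψ := by
    intro y
    obtain ⟨f, rfl⟩ := Ideal.Quotient.mk_surjective y
    refine ⟨f.coeff 0, ?_⟩
    rw [hψ_apply, Ideal.Quotient.mk_eq_mk_iff_sub_mem]
    have h := X_mul_divX_add f
    have : C (f.coeff 0) - f = -(X * f.divX) := by linear_combination h
    rw [this]
    exact Submodule.neg_mem _
      (Submodule.mem_sup_left (Ideal.mem_span_singleton'.2 ⟨f.divX, mul_comm _ _⟩))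
  have hkerψ : LinearMap.ker ψ = m ^ (k + 1) := by
    ext c
    rw [LinearMap.mem_ker, hψ_apply, Ideal.Quotient.eq_zero_iff_mem]
    constructor
    · intro h
      have := coeff_zero_mem_of_mem_sup m (s := k + 1) h
      simpa using this
    · intro h
      exact Submodule.mem_sup_right (Ideal.mem_map_of_mem _ h)
  have e_quot : moduleLength R ((R[X] ⧸ I ^ (k + 1)) ⧸ (LinearMap.range Φ)) =
      moduleLength R (R ⧸ m ^ (k + 1)) := by
    rw [← moduleLength_congr (LinearMap.quotKerEquivOfSurjective Ψ hΨsurj),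
      moduleLength_congr (Submodule.quotEquivOfEq _ _ hkerΨ)]
    have hKK : Ideal.span {(X : R[X])} ⊔ I ^ (k + 1) = K := span_X_sup_pow m (k + 1)
    rw [moduleLength_congr (Submodule.quotEquivOfEq _ _
        (congrArg (Submodule.restrictScalars R) hKK)),
      moduleLength_congr (Submodule.Quotient.restrictScalarsEquiv R K),
      ← moduleLength_congr (LinearMap.quotKerEquivOfSurjective ψ hψsurj),
      moduleLength_congr (Submodule.quotEquivOfEq _ _ hkerψ)]
  rw [moduleLength_additive (LinearMap.range Φ), e_range, e_quot]

end Main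


/-- **`Λ(H⁰(R)) = H⁰` of the local ring of `X × 𝔸¹` at `(a,0)`** (Section 6.3).
Let `(R, 𝔪)` be a commutative Noetherian local ring and `I = 𝔪·R[X] + (X) ⊆ R[X]`.
Then for every `n`, `length_R (R[X]/I^{n+1}) = ∑_{j=0}^{n} length_R (R/𝔪^{j+1})`. -/
theorem length_polynomial_quotient_pow_eq_sum_hilbertSamuel
    (R : Type*) [CommRing R] [IsNoetherianRing R] [IsLocalRing R] (n : ℕ) :
    moduleLength R
        (R[X] ⧸ ((IsLocalRing.maximalIdeal R).map (C : R →+* R[X]) +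
            Ideal.span {(X : R[X])}) ^ (n + 1)) =
      ∑ j ∈ Finset.range (n + 1),
        moduleLength R (R ⧸ (IsLocalRing.maximalIdeal R) ^ (j + 1)) := by
  set m : Ideal R := IsLocalRing.maximalIdeal R
  suffices H : ∀ k : ℕ, moduleLength R (R[X] ⧸ polyIdeal R m ^ k) =
      ∑ j ∈ Finset.range k, moduleLength R (R ⧸ m ^ (j + 1)) from H (n + 1)
  intro k
  induction k with
  | zero =>
    rw [Finset.range_zero, Finset.sum_empty, pow_zero, Ideal.one_eq_top]
    haveI : Subsingleton (R[X] ⧸ (⊤ : Ideal R[X])) :=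
      Submodule.Quotient.subsingleton_iff.mpr rfl
    exact moduleLength_eq_zero
  | succ k IH =>
    rw [Finset.sum_range_succ, ← IH, step_length]
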